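/- Let (n_k)_{k≥1} be a sequence of integers with n_k ≥ 2, and suppose there exists 𝔯 ∈ ℕ such that for every k ≥ 0 there is some 1 ≤ J ≤ 𝔯+1 with n_{k+J} ≥ 3 (runs of the digit 2 have length at most 𝔯). Set Δ := 1/(2+𝔯). Then for every k ≥ 1: (i) ℓ_k(1)/ℓ_k(0) ≥ Δ; and (ii) for each i ∈ {0,1} with (n_{k+1}, i) ≠ (2,1): n_{k+1}−1−i ≤ p_{k+1}(i)/(1 − p_{k+1}(i)) ≤ (n_{k+1}−1−i)/Δ. -/

import Mathlib

def ellSeq (nseq : ℕ → ℕ) : ℕ → ℕ × ℕ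
  | 0 => (1, 1)
  | k+1 => ((nseq (k+1) - 1) * (ellSeq nseq k).1 + (ellSeq nseq k).2,
            (nseq (k+1) - 2) * (ellSeq nseq k).1 + (ellSeq nseq k).2)

def ellI (nseq : ℕ → ℕ) (k i : ℕ) : ℕ :=
  if i = 0 then (ellSeq nseq k).1 else (ellSeq nseq k).2

noncomputable def pcoef (nseq : ℕ → ℕ) (k i : ℕ) : ℝ :=
  ((nseq (k+1) : ℝ) - 1 - (i : ℝ)) * ((ellSeq nseq k).1 : ℝ) / (ellI nseq (k+1) i : ℝ)

lemma ell_snd_pos (nseq : ℕ → ℕ) : ∀ k, 1 ≤ (ellSeq nseq k).2 := by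
  intro k
  induction k with
  | zero => simp [ellSeq]
  | succ k ih => simp only [ellSeq]; omega

lemma ell_le (nseq : ℕ → ℕ) : ∀ k, (ellSeq nseq k).2 ≤ (ellSeq nseq k).1 := by
  intro k
  induction k with
  | zero => simp [ellSeq]
  | succ k ih =>
    simp only [ellSeq]
    have := Nat.mul_le_mul_right (ellSeq nseq k).1
      (show nseq (k+1) - 2 ≤ nseq (k+1) - 1 by omega)
    omega

def tk (nseq : ℕ → ℕ) : ℕ → ℕ
  | 0 => 0
  | k+1 => if nseq (k+1) = 2 then tk nseq k + 1 else 0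

lemma tk_le (nseq : ℕ → ℕ) : ∀ k, tk nseq k ≤ k := by
  intro k
  induction k with
  | zero => simp [tk]
  | succ k ih => simp only [tk]; split <;> omega

lemma tk_run (nseq : ℕ → ℕ) : ∀ k j, j < tk nseq k → nseq (k - j) = 2 := by
  intro k
  induction k with
  | zero => simp [tk]
  | succ k ih =>
    intro j hj
    simp only [tk] at hj
    by_cases h : nseq (k+1) = 2
    · rw [if_pos h] at hj
      cases j with
      | zero => simpa using h
      | succ j' =>
        have : k + 1 - (j'+1) = k - j' := by omega
        rw [this]
        exact ih j' (by omega)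
    · rw [if_neg h] at hj; omega

lemma tk_le_r (nseq : ℕ → ℕ) (r : ℕ)
    (hr : ∀ k : ℕ, ∃ J : ℕ, 1 ≤ J ∧ J ≤ r + 1 ∧ 3 ≤ nseq (k + J)) :
    ∀ k, tk nseq k ≤ r := by
  intro k
  by_contra h
  push_neg at h
  have hk : r + 1 ≤ k := le_trans h (tk_le nseq k)
  obtain ⟨J, hJ1, hJ2, hJ3⟩ := hr (k - (r+1))
  have he : k - (r+1) + J = k - (r+1-J) := by omega
  have := tk_run nseq k (r+1-J) (by omega)
  rw [he, this] at hJ3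
  omega

lemma ell_nat_bound (nseq : ℕ → ℕ) (hn : ∀ k, 1 ≤ k → 2 ≤ nseq k) :
    ∀ k, (ellSeq nseq k).1 ≤ (2 + tk nseq k) * (ellSeq nseq k).2 := by
  intro k
  induction k with
  | zero => simp [ellSeq, tk]
  | succ k ih =>
    have h2 : 2 ≤ nseq (k+1) := hn (k+1) (by omega)
    have hp := ell_snd_pos nseq k
    simp only [ellSeq, tk]
    by_cases h : nseq (k+1) = 2
    · rw [if_pos h, h]
      simp only [show 2-1 = 1 by rfl, show 2-2 = 0 by rfl, one_mul, zero_mul, zero_add]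
      calc (ellSeq nseq k).1 + (ellSeq nseq k).2
          ≤ (2 + tk nseq k) * (ellSeq nseq k).2 + (ellSeq nseq k).2 :=
            Nat.add_le_add_right ih _
        _ = (2 + (tk nseq k + 1)) * (ellSeq nseq k).2 := by ring
    · rw [if_neg h]
      have h3 : 3 ≤ nseq (k+1) := by omega
      have hm : nseq (k+1) - 1 ≤ 2 * (nseq (k+1) - 2) := by omega
      have := Nat.mul_le_mul_right (ellSeq nseq k).1 hm
      nlinarith

lemma ratio_ge (nseq : ℕ → ℕ) (hn : ∀ k, 1 ≤ k → 2 ≤ nseq k) (k : ℕ) :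
    1 / (2 + (tk nseq k : ℝ)) ≤ ((ellSeq nseq k).2 : ℝ) / ((ellSeq nseq k).1 : ℝ) := by
  have hb := ell_nat_bound nseq hn k
  have hp := ell_snd_pos nseq k
  have hp1 : 1 ≤ (ellSeq nseq k).1 := le_trans hp (ell_le nseq k)
  have h1 : (0:ℝ) < 2 + (tk nseq k : ℝ) := by positivity
  have h2 : (0:ℝ) < ((ellSeq nseq k).1 : ℝ) := by exact_mod_cast hp1
  rw [div_le_div_iff₀ h1 h2]
  have : ((ellSeq nseq k).1 : ℝ) ≤ (2 + (tk nseq k : ℝ)) * ((ellSeq nseq k).2 : ℝ) := by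
    exact_mod_cast hb
  linarith

lemma pdiv (c L L' D : ℝ) (hc : 1 ≤ c) (hL' : 0 < L') (hle : L' ≤ L)
    (hD : 0 < D) (hDle : D ≤ L' / L) :
    c ≤ (c*L/(c*L+L'))/(1 - c*L/(c*L+L')) ∧
      (c*L/(c*L+L'))/(1 - c*L/(c*L+L')) ≤ c / D := by
  have hL : 0 < L := lt_of_lt_of_le hL' hle
  have hsum : 0 < c*L+L' := by nlinarith
  have h1 : 1 - c*L/(c*L+L') = L'/(c*L+L') := by field_simp; ring
  have h2 : (c*L/(c*L+L'))/(1 - c*L/(c*L+L')) = c*L/L' := by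
    rw [h1]
    field_simp
  rw [h2]
  have hDL : D * L ≤ L' := by
    rw [le_div_iff₀ hL] at hDle
    linarith
  constructor
  · rw [le_div_iff₀ hL']
    nlinarith
  · rw [div_le_div_iff₀ hL' hD]
    nlinarith [mul_le_mul_of_nonneg_left hDL (le_trans zero_le_one hc)]

theorem bad_sublemma
    (nseq : ℕ → ℕ) (hn : ∀ k, 1 ≤ k → 2 ≤ nseq k)
    (r : ℕ) (hr : ∀ k : ℕ, ∃ J : ℕ, 1 ≤ J ∧ J ≤ r + 1 ∧ 3 ≤ nseq (k + J)) :
    ∀ k, 1 ≤ k →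
      (1 / (2 + (r : ℝ)) ≤ ((ellSeq nseq k).2 : ℝ) / ((ellSeq nseq k).1 : ℝ)) ∧
      ∀ i : ℕ, i ≤ 1 → ¬(nseq (k+1) = 2 ∧ i = 1) →
        ((nseq (k+1) : ℝ) - 1 - (i : ℝ)) ≤
            pcoef nseq k i / (1 - pcoef nseq k i) ∧
          pcoef nseq k i / (1 - pcoef nseq k i) ≤
            ((nseq (k+1) : ℝ) - 1 - (i : ℝ)) / (1 / (2 + (r : ℝ))) := by
  intro k hk
  have hℓ' : 1 ≤ (ellSeq nseq k).2 := ell_snd_pos nseq k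
  have hle : (ellSeq nseq k).2 ≤ (ellSeq nseq k).1 := ell_le nseq k
  have hΔpos : (0:ℝ) < 1/(2+(r:ℝ)) := by positivity
  have hρ : 1 / (2 + (r : ℝ)) ≤ ((ellSeq nseq k).2 : ℝ) / ((ellSeq nseq k).1 : ℝ) := by
    refine le_trans ?_ (ratio_ge nseq hn k)
    have htk : (tk nseq k : ℝ) ≤ (r : ℝ) := by exact_mod_cast tk_le_r nseq r hr k
    apply one_div_le_one_div_of_le (by positivity)
    linarith
  refine ⟨hρ, ?_⟩
  intro i hi hni
  have hn2 : 2 ≤ nseq (k+1) := hn (k+1) (by omega)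
  have hL'pos : (0:ℝ) < ((ellSeq nseq k).2 : ℝ) := by exact_mod_cast hℓ'
  have hLle : ((ellSeq nseq k).2 : ℝ) ≤ ((ellSeq nseq k).1 : ℝ) := by exact_mod_cast hle
  interval_cases i
  · have hc : (1:ℝ) ≤ (nseq (k+1) : ℝ) - 1 - (0:ℕ) := by
      have : (2:ℝ) ≤ (nseq (k+1) : ℝ) := by exact_mod_cast hn2
      push_cast; linarith
    have hpe : pcoef nseq k 0 =
        ((nseq (k+1) : ℝ) - 1 - (0:ℕ)) * ((ellSeq nseq k).1 : ℝ) /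
          (((nseq (k+1) : ℝ) - 1 - (0:ℕ)) * ((ellSeq nseq k).1 : ℝ) + ((ellSeq nseq k).2 : ℝ)) := by
      unfold pcoef ellI
      simp only [ellSeq, ellI, ite_true, if_pos rfl]
      rw [Nat.cast_add, Nat.cast_mul, Nat.cast_sub (by omega : 1 ≤ nseq (k+1))]
      push_cast
      ring_nf
    rw [hpe]
    exact pdiv _ _ _ _ hc hL'pos hLle hΔpos hρ
  · have hn3 : 3 ≤ nseq (k+1) := by
      rcases Nat.lt_or_ge (nseq (k+1)) 3 with h | h
      · exact absurd ⟨by omega, rfl⟩ hni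
      · exact h
    have hc : (1:ℝ) ≤ (nseq (k+1) : ℝ) - 1 - (1:ℕ) := by
      have : (3:ℝ) ≤ (nseq (k+1) : ℝ) := by exact_mod_cast hn3
      push_cast; linarith
    have hpe : pcoef nseq k 1 =
        ((nseq (k+1) : ℝ) - 1 - (1:ℕ)) * ((ellSeq nseq k).1 : ℝ) /
          (((nseq (k+1) : ℝ) - 1 - (1:ℕ)) * ((ellSeq nseq k).1 : ℝ) + ((ellSeq nseq k).2 : ℝ)) := by
      unfold pcoef ellI
      simp only [ellSeq, ellI, ite_false, if_neg (by norm_num : (1:ℕ) ≠ 0)]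
      rw [Nat.cast_add, Nat.cast_mul, Nat.cast_sub (by omega : 2 ≤ nseq (k+1))]
      push_cast
      ring_nf
    rw [hpe]
    exact pdiv _ _ _ _ hc hL'pos hLle hΔpos hρ
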